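/- arXiv:2605.25853 — 2 statements merged into one kernel-verified Lean document; each statement's English description precedes it below -/
import Mathlib

section
/- Let c > 0 and let F : ℝ → ℝ be continuous with F(V) ≤ -(c/2)V² for all V, F(0)=0, and √(-F) locally Lipschitz. If V̄ ≤ 0 and V : [0,∞) → ℝ solves the ODE V'(y) = √(-2F(V(y))) with V(0) = V̄, then V is nondecreasing, V(y) ≤ 0 for all y, V(y) → 0 as y → ∞, and |V(y)| ≤ |V̄| e^{-√c · y} for all y ≥ 0. -/
open Set Filter Topology

theorem stmt1 (c : ℝ) (hc : 0 < c) (F : ℝ → ℝ) (hFcont : Continuous F)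
    (hF0 : F 0 = 0) (hFle : ∀ V, F V ≤ -(c/2) * V^2)
    (hlip : LocallyLipschitz (fun V => Real.sqrt (-F V)))
    (Vb : ℝ) (hVb : Vb ≤ 0) (V : ℝ → ℝ)
    (hode : ∀ y ≥ (0:ℝ), HasDerivAt V (Real.sqrt (-2 * F (V y))) y)
    (hinit : V 0 = Vb) :
    MonotoneOn V (Set.Ici 0) ∧ (∀ y ≥ (0:ℝ), V y ≤ 0) ∧
    Filter.Tendsto V Filter.atTop (nhds 0) ∧
    (∀ y ≥ (0:ℝ), |V y| ≤ |Vb| * Real.exp (-Real.sqrt c * y)) := by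
  -- continuity of V on Ici 0
  have hcontAt : ∀ y ≥ (0:ℝ), ContinuousAt V y := fun y hy => (hode y hy).continuousAt
  have hcontOn : ContinuousOn V (Set.Ici 0) := fun y hy =>
    (hcontAt y hy).continuousWithinAt
  -- monotonicity
  have hmono : MonotoneOn V (Set.Ici 0) := by
    apply monotoneOn_of_deriv_nonneg (convex_Ici 0) hcontOn
    · intro x hx
      rw [interior_Ici] at hx
      exact ((hode x (le_of_lt hx)).differentiableAt).differentiableWithinAt
    · intro x hx
      rw [interior_Ici] at hx
      rw [(hode x (le_of_lt hx)).deriv]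
      exact Real.sqrt_nonneg _
  -- nonpositivity
  have hnonpos : ∀ y ≥ (0:ℝ), V y ≤ 0 := by
    by_contra h
    push_neg at h
    obtain ⟨t₀, ht₀0, ht₀⟩ := h
    set S : Set ℝ := {t ∈ Set.Icc 0 t₀ | V t ≤ 0} with hS
    have hScompact : IsCompact S := by
      apply (isCompact_Icc (a := (0:ℝ)) (b := t₀)).of_isClosed_subset
      · rw [isClosed_iff_clusterPt]
        intro t ht
        have htmem : t ∈ Set.Icc 0 t₀ := by
          have : IsClosed (Set.Icc (0:ℝ) t₀) := isClosed_Icc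
          rw [isClosed_iff_clusterPt] at this
          exact this t (ht.mono (le_principal_iff.mpr fun x hx => hx.1))
        refine ⟨htmem, ?_⟩
        have hct : ContinuousAt V t := hcontAt t htmem.1
        by_contra hVt
        push_neg at hVt
        have : ∀ᶠ x in 𝓝 t, 0 < V x := hct.eventually (eventually_gt_nhds hVt)
        have hne : (𝓝 t ⊓ 𝓟 S).NeBot := ht
        have : ∀ᶠ x in 𝓝 t ⊓ 𝓟 S, False := by
          filter_upwards [this.filter_mono inf_le_left,
            (eventually_principal.mpr (fun x (hx : x ∈ S) => hx.2)).filter_mono inf_le_right]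
            with x h1 h2
          linarith
        exact (this.exists).elim (fun x hx => hx)
      · exact fun x hx => hx.1
    have hSne : S.Nonempty := ⟨0, ⟨le_refl 0, ht₀0⟩, by rw [hinit]; exact hVb⟩
    set t₁ := sSup S with ht₁def
    have ht₁S : t₁ ∈ S := hScompact.sSup_mem hSne
    have ht₁0 : 0 ≤ t₁ := ht₁S.1.1
    have ht₁t₀ : t₁ ≤ t₀ := ht₁S.1.2
    have ht₁lt : t₁ < t₀ := lt_of_le_of_ne ht₁t₀ (by
      intro heq; rw [heq] at ht₁S; linarith [ht₁S.2])
    -- V > 0 strictly after t₁ up to t₀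
    have hpos : ∀ t, t₁ < t → t ≤ t₀ → 0 < V t := by
      intro t h1 h2
      by_contra hle
      push_neg at hle
      have : t ∈ S := ⟨⟨le_trans ht₁0 (le_of_lt h1), h2⟩, hle⟩
      have : t ≤ t₁ := le_csSup hScompact.bddAbove this
      linarith
    -- V t₁ = 0
    have hVt₁ : V t₁ = 0 := by
      refine le_antisymm ht₁S.2 ?_
      have hct : ContinuousWithinAt V (Set.Ioi t₁) t₁ :=
        (hcontAt t₁ ht₁0).continuousWithinAt
      refine ge_of_tendsto hct ?_
      filter_upwards [Ioc_mem_nhdsGT_of_mem ⟨le_refl t₁, ht₁lt⟩] with x hx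
      exact le_of_lt (hpos x hx.1 hx.2)
    -- local Lipschitz data at 0
    obtain ⟨K, U, hU, hKlip⟩ := hlip 0
    have h0U : (0:ℝ) ∈ U := mem_of_mem_nhds hU
    -- the vector field x ↦ √(-2 F x) is Lipschitz on U
    have hsqrt2 : ∀ x : ℝ, Real.sqrt (-2 * F x) = Real.sqrt 2 * Real.sqrt (-F x) := by
      intro x
      rw [show (-2 : ℝ) * F x = 2 * (-F x) by ring, Real.sqrt_mul (by norm_num)]
    set K' : NNReal := ⟨Real.sqrt 2, Real.sqrt_nonneg 2⟩ * K with hK'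
    have hvlip : LipschitzOnWith K' (fun x => Real.sqrt (-2 * F x)) U := by
      rw [lipschitzOnWith_iff_dist_le_mul]
      intro x hx y hy
      rw [hsqrt2, hsqrt2, Real.dist_eq, ← mul_sub, abs_mul,
        abs_of_nonneg (Real.sqrt_nonneg 2)]
      have := (lipschitzOnWith_iff_dist_le_mul.mp hKlip) x hx y hy
      rw [Real.dist_eq] at this
      calc Real.sqrt 2 * |Real.sqrt (-F x) - Real.sqrt (-F y)|
          ≤ Real.sqrt 2 * ((K : ℝ) * dist x y) := by
            apply mul_le_mul_of_nonneg_left _ (Real.sqrt_nonneg 2)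
            rwa [Real.dist_eq] at this ⊢
        _ = (K' : ℝ) * dist x y := by
            rw [hK']; change _ = (Real.sqrt 2 * (K : ℝ)) * dist x y; ring
    -- find b with t₁ < b ≤ t₀ and V(Icc t₁ b) ⊆ U
    have hVU : ∀ᶠ t in 𝓝 t₁, V t ∈ U := by
      apply (hcontAt t₁ ht₁0).eventually_mem
      rwa [hVt₁]
    obtain ⟨ε, hε, hball⟩ := Metric.eventually_nhds_iff.mp hVU
    set b := min (t₁ + ε/2) t₀ with hb
    have hbt₁ : t₁ < b := lt_min (by linarith) ht₁lt
    have hbt₀ : b ≤ t₀ := min_le_right _ _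
    have hmem : ∀ t ∈ Set.Icc t₁ b, V t ∈ U := by
      intro t ht
      apply hball
      rw [Real.dist_eq, abs_of_nonneg (by linarith [ht.1])]
      have : t ≤ t₁ + ε/2 := le_trans ht.2 (min_le_left _ _)
      linarith
    -- uniqueness on [t₁, b] against the zero solution
    have h0' : Real.sqrt (-2 * F 0) = 0 := by
      rw [hF0]; simp
    have huniq : Set.EqOn V (fun _ => (0:ℝ)) (Set.Icc t₁ b) := by
      apply ODE_solution_unique_of_mem_Icc_right
        (v := fun _ x => Real.sqrt (-2 * F x)) (s := fun _ => U) (K := K')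
        (fun _ _ => hvlip)
      · exact fun t ht => (hcontAt t (le_trans ht₁0 ht.1)).continuousWithinAt
      · exact fun t ht => (hode t (le_trans ht₁0 ht.1)).hasDerivWithinAt
      · exact fun t ht => hmem t ⟨ht.1, le_of_lt ht.2⟩
      · exact continuousOn_const
      · intro t ht
        rw [show Real.sqrt (-2 * F ((fun _ => (0:ℝ)) t)) = 0 from h0']
        exact hasDerivWithinAt_const t _ 0
      · exact fun t _ => h0U
      · exact hVt₁
    have : V b = 0 := huniq ⟨le_of_lt hbt₁, le_refl b⟩
    have := hpos b hbt₁ hbt₀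
    linarith
  -- the exponential lower bound: V y ≥ Vb * exp(-√c y)
  have hsc : 0 < Real.sqrt c := Real.sqrt_pos.mpr hc
  have hlow : ∀ y ≥ (0:ℝ), Vb * Real.exp (-Real.sqrt c * y) ≤ V y := by
    intro y hy
    set W : ℝ → ℝ := fun t => V t * Real.exp (Real.sqrt c * t) with hW
    have hWderiv : ∀ t ≥ (0:ℝ), HasDerivAt W
        (Real.sqrt (-2 * F (V t)) * Real.exp (Real.sqrt c * t)
          + V t * (Real.sqrt c * Real.exp (Real.sqrt c * t))) t := by
      intro t ht
      have he : HasDerivAt (fun t => Real.exp (Real.sqrt c * t))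
          (Real.sqrt c * Real.exp (Real.sqrt c * t)) t := by
        have := (hasDerivAt_id t).const_mul (Real.sqrt c)
        have := this.exp
        simpa [mul_comm] using this
      exact (hode t ht).mul he
    have hWnonneg : ∀ t ≥ (0:ℝ), 0 ≤ Real.sqrt (-2 * F (V t)) * Real.exp (Real.sqrt c * t)
        + V t * (Real.sqrt c * Real.exp (Real.sqrt c * t)) := by
      intro t ht
      have h1 : Real.sqrt c * (-(V t)) ≤ Real.sqrt (-2 * F (V t)) := by
        have h2 : c * (V t)^2 ≤ -2 * F (V t) := by
          have := hFle (V t); nlinarith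
        calc Real.sqrt c * (-(V t)) ≤ Real.sqrt c * |V t| := by
              apply mul_le_mul_of_nonneg_left _ (le_of_lt hsc)
              exact neg_le_abs _
          _ = Real.sqrt (c * (V t)^2) := by
              rw [Real.sqrt_mul hc.le, Real.sqrt_sq_eq_abs]
          _ ≤ Real.sqrt (-2 * F (V t)) := Real.sqrt_le_sqrt h2
      have hexp : 0 < Real.exp (Real.sqrt c * t) := Real.exp_pos _
      nlinarith
    have hWmono : MonotoneOn W (Set.Ici 0) := by
      apply monotoneOn_of_deriv_nonneg (convex_Ici 0)
      · exact fun t ht => ((hWderiv t ht).continuousAt).continuousWithinAt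
      · intro t ht
        rw [interior_Ici] at ht
        exact ((hWderiv t (le_of_lt ht)).differentiableAt).differentiableWithinAt
      · intro t ht
        rw [interior_Ici] at ht
        rw [(hWderiv t (le_of_lt ht)).deriv]
        exact hWnonneg t (le_of_lt ht)
    have hW0 : W 0 = Vb := by simp [hW, hinit]
    have : Vb ≤ W y := by
      rw [← hW0]
      exact hWmono (le_refl (0:ℝ) : (0:ℝ) ∈ Set.Ici 0) hy hy
    have hexp : 0 < Real.exp (Real.sqrt c * y) := Real.exp_pos _
    rw [hW] at this
    calc Vb * Real.exp (-Real.sqrt c * y)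
        ≤ (V y * Real.exp (Real.sqrt c * y)) * Real.exp (-Real.sqrt c * y) :=
          mul_le_mul_of_nonneg_right this (Real.exp_pos _).le
      _ = V y := by
          rw [mul_assoc, ← Real.exp_add,
            show Real.sqrt c * y + -Real.sqrt c * y = 0 by ring, Real.exp_zero, mul_one]
  have habs : ∀ y ≥ (0:ℝ), |V y| ≤ |Vb| * Real.exp (-Real.sqrt c * y) := by
    intro y hy
    rw [abs_of_nonpos (hnonpos y hy), abs_of_nonpos hVb]
    have := hlow y hy
    nlinarith [Real.exp_pos (-Real.sqrt c * y)]
  refine ⟨hmono, hnonpos, ?_, habs⟩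
  have hlowtend : Tendsto (fun y => Vb * Real.exp (-Real.sqrt c * y)) atTop (nhds 0) := by
    have h1 : Tendsto (fun y : ℝ => -Real.sqrt c * y) atTop atBot := by
      apply Tendsto.const_mul_atTop_of_neg (by linarith : -Real.sqrt c < 0) tendsto_id
    have h2 : Tendsto (fun y : ℝ => Real.exp (-Real.sqrt c * y)) atTop (nhds 0) :=
      Real.tendsto_exp_atBot.comp h1
    simpa using tendsto_const_nhds.mul h2
  apply tendsto_of_tendsto_of_tendsto_of_le_of_le' hlowtend tendsto_const_nhds
  · filter_upwards [eventually_ge_atTop (0:ℝ)] with y hy using hlow y hy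
  · filter_upwards [eventually_ge_atTop (0:ℝ)] with y hy using hnonpos y hy
end

section
/- Let f ∈ C¹(ℝ) with f'(u) ≤ -c < 0 for all u, and ū⁰ ∈ ℝ. If V₁, V₂ ∈ C²([0,∞)) ∩ H¹(0,∞) both satisfy f(ū⁰+Vᵢ) - f(ū⁰) + Vᵢ'' = 0 on (0,∞), Vᵢ(0) = V̄, and Vᵢ(y) → 0 as y → ∞, then V₁ ≡ V₂. (Uniqueness of the boundary layer profile.) -/
open Set Filter MeasureTheory

lemma mvt_key (f : ℝ → ℝ) (c : ℝ) (hf : ContDiff ℝ 1 f)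
    (hf' : ∀ u, deriv f u ≤ -c) {a b : ℝ} (h : b ≤ a) :
    f a - f b ≤ -c * (a - b) := by
  have hfd : Differentiable ℝ f := hf.differentiable one_ne_zero
  have hg : Antitone (fun u => f u + c * u) := by
    apply antitone_of_deriv_nonpos (hfd.add (differentiable_id.const_mul c))
    intro x
    rw [deriv_add (hfd x) ((differentiable_id.const_mul c) x), deriv_const_mul _ differentiable_id.differentiableAt, deriv_id]
    have := hf' x
    simp only [mul_one]
    linarith
  have := hg h
  simp only at this
  nlinarith

lemma one_side (f : ℝ → ℝ) (c : ℝ) (hc : 0 < c) (hf : ContDiff ℝ 1 f)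
    (hf' : ∀ u, deriv f u ≤ -c) (u0 : ℝ) (V₁ V₂ : ℝ → ℝ)
    (h1 : ContDiff ℝ 2 V₁) (h2 : ContDiff ℝ 2 V₂)
    (heq1 : ∀ y ≥ (0:ℝ), f (u0 + V₁ y) - f u0 + deriv (deriv V₁) y = 0)
    (heq2 : ∀ y ≥ (0:ℝ), f (u0 + V₂ y) - f u0 + deriv (deriv V₂) y = 0)
    (hb : V₁ 0 = V₂ 0)
    (hlim1 : Filter.Tendsto V₁ Filter.atTop (nhds 0))
    (hlim2 : Filter.Tendsto V₂ Filter.atTop (nhds 0)) :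
    ∀ y ≥ (0:ℝ), V₁ y ≤ V₂ y := by
  set W : ℝ → ℝ := fun y => V₁ y - V₂ y with hWdef
  have hd1 : Differentiable ℝ V₁ := h1.differentiable (by norm_num)
  have hd2 : Differentiable ℝ V₂ := h2.differentiable (by norm_num)
  have hW : Differentiable ℝ W := hd1.sub hd2
  have h1' : ContDiff ℝ 1 (deriv V₁) :=
    ((contDiff_succ_iff_deriv (n := 1)).mp (by exact_mod_cast h1)).2.2
  have h2' : ContDiff ℝ 1 (deriv V₂) :=
    ((contDiff_succ_iff_deriv (n := 1)).mp (by exact_mod_cast h2)).2.2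
  have hdW : deriv W = fun y => deriv V₁ y - deriv V₂ y := by
    funext y; exact deriv_sub (hd1 y) (hd2 y)
  have hW' : Differentiable ℝ (deriv W) := by
    rw [hdW]; exact (h1'.differentiable one_ne_zero).sub (h2'.differentiable one_ne_zero)
  have hdW2 : ∀ y, deriv (deriv W) y = deriv (deriv V₁) y - deriv (deriv V₂) y := by
    intro y; rw [hdW]; exact deriv_sub (h1'.differentiable one_ne_zero y) (h2'.differentiable one_ne_zero y)
  by_contra hcon
  push_neg at hcon
  obtain ⟨y0, hy0, hy0'⟩ := hcon
  set m : ℝ := W y0 with hm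
  have hmpos : 0 < m := by simp [hm, hWdef]; linarith
  have hWlim : Tendsto W atTop (nhds 0) := by
    have := hlim1.sub hlim2; simpa using this
  have hev : ∀ᶠ y in atTop, W y < m := hWlim.eventually_lt_const hmpos
  obtain ⟨R, hR⟩ := eventually_atTop.mp hev
  have hy0R : y0 ≤ R := by
    by_contra h
    have := hR y0 (le_of_not_ge h)
    simp [hm] at this
  have hR0 : (0:ℝ) ≤ R := le_trans hy0 hy0R
  obtain ⟨ys, hysmem, hmax⟩ := isCompact_Icc.exists_isMaxOn (Set.nonempty_Icc.mpr hR0)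
    hW.continuous.continuousOn
  have hysm : m ≤ W ys := hmax ⟨hy0, hy0R⟩
  have hW0 : W 0 = 0 := by simp [hWdef, hb]
  have hys : ys ∈ Ioo 0 R := by
    constructor
    · rcases lt_or_eq_of_le hysmem.1 with h | h
      · exact h
      · exfalso; rw [← h, hW0] at hysm; linarith
    · rcases lt_or_eq_of_le hysmem.2 with h | h
      · exact h
      · exfalso; have := hR R le_rfl; rw [← h] at this; linarith
  have hglob : ∀ y, 0 ≤ y → W y ≤ W ys := by
    intro y hy
    by_cases h : y ≤ R
    · exact hmax ⟨hy, h⟩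
    · have := hR y (le_of_not_ge h); linarith
  have hderiv0 : deriv W ys = 0 :=
    (hmax.isLocalMax (Icc_mem_nhds hys.1 hys.2)).deriv_eq_zero
  -- second derivative is positive at ys
  have hys0 : (0:ℝ) ≤ ys := le_of_lt hys.1
  have hWys : 0 < W ys := lt_of_lt_of_le hmpos hysm
  have hfab : f (u0 + V₁ ys) - f (u0 + V₂ ys) ≤ -c * (W ys) := by
    have key := mvt_key f c hf hf' (a := u0 + V₁ ys) (b := u0 + V₂ ys)
      (by simp only [hWdef] at hWys; linarith)
    have heqv : u0 + V₁ ys - (u0 + V₂ ys) = W ys := by simp [hWdef]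
    rw [heqv] at key
    exact key
  have hpos : 0 < deriv (deriv W) ys := by
    have e1 := heq1 ys hys0
    have e2 := heq2 ys hys0
    rw [hdW2]
    nlinarith
  -- deriv (deriv W) is continuous
  have hcont : Continuous (deriv (deriv W)) := by
    have : deriv (deriv W) = fun y => deriv (deriv V₁) y - deriv (deriv V₂) y := funext hdW2
    rw [this]
    exact (h1'.continuous_deriv le_rfl).sub (h2'.continuous_deriv le_rfl)
  have hUopen : IsOpen {y | 0 < deriv (deriv W) y} := isOpen_lt continuous_const hcont
  obtain ⟨δ, hδ, hball⟩ := Metric.isOpen_iff.mp hUopen ys hpos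
  set ε : ℝ := δ / 2 with hε
  have hεpos : 0 < ε := by positivity
  have hsub : Icc ys (ys + ε) ⊆ {y | 0 < deriv (deriv W) y} := by
    intro x hx
    apply hball
    rw [Metric.mem_ball, Real.dist_eq, abs_of_nonneg (by linarith [hx.1])]
    have := hx.2; simp [hε] at this ⊢; linarith
  have hmono' : StrictMonoOn (deriv W) (Icc ys (ys + ε)) := by
    apply strictMonoOn_of_deriv_pos (convex_Icc _ _) hW'.continuous.continuousOn
    intro x hx
    rw [interior_Icc] at hx
    exact hsub ⟨hx.1.le, hx.2.le⟩
  have hderivpos : ∀ x ∈ Ioc ys (ys + ε), 0 < deriv W x := by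
    intro x hx
    have := hmono' ⟨le_rfl, by linarith⟩ ⟨hx.1.le, hx.2⟩ hx.1
    rwa [hderiv0] at this
  have hmono : StrictMonoOn W (Icc ys (ys + ε)) := by
    apply strictMonoOn_of_deriv_pos (convex_Icc _ _) hW.continuous.continuousOn
    intro x hx
    rw [interior_Icc] at hx
    exact hderivpos x ⟨hx.1, hx.2.le⟩
  have hlt : W ys < W (ys + ε) :=
    hmono ⟨le_rfl, by linarith⟩ ⟨by linarith, le_rfl⟩ (by linarith)
  have := hglob (ys + ε) (by linarith)
  linarith

theorem stmt3 (f : ℝ → ℝ) (c : ℝ) (hc : 0 < c) (hf : ContDiff ℝ 1 f)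
    (hf' : ∀ u, deriv f u ≤ -c) (u0 Vb : ℝ) (V₁ V₂ : ℝ → ℝ)
    (h1 : ContDiff ℝ 2 V₁) (h2 : ContDiff ℝ 2 V₂)
    (heq1 : ∀ y ≥ (0:ℝ), f (u0 + V₁ y) - f u0 + deriv (deriv V₁) y = 0)
    (heq2 : ∀ y ≥ (0:ℝ), f (u0 + V₂ y) - f u0 + deriv (deriv V₂) y = 0)
    (hb1 : V₁ 0 = Vb) (hb2 : V₂ 0 = Vb)
    (hlim1 : Filter.Tendsto V₁ Filter.atTop (nhds 0))
    (hlim2 : Filter.Tendsto V₂ Filter.atTop (nhds 0))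
    (hL2 : MeasureTheory.IntegrableOn (fun y => (V₁ y - V₂ y)^2) (Set.Ioi 0))
    (hL2' : MeasureTheory.IntegrableOn
      (fun y => (deriv V₁ y - deriv V₂ y)^2) (Set.Ioi 0)) :
    ∀ y ≥ (0:ℝ), V₁ y = V₂ y := by
  intro y hy
  exact le_antisymm
    (one_side f c hc hf hf' u0 V₁ V₂ h1 h2 heq1 heq2 (by rw [hb1, hb2]) hlim1 hlim2 y hy)
    (one_side f c hc hf hf' u0 V₂ V₁ h2 h1 heq2 heq1 (by rw [hb1, hb2]) hlim2 hlim1 y hy)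
end
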